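/- Every sequence $(a_n)$ in a semigroup has a sumsequence $(b_n)$ satisfying one of: (1) $b_n + b_m = b_n$ for all $n < m$; or (2) for all $n$, $FS(b_1, \dots, b_n) \cap (FS(b_1, \dots, b_n) + b_{n+1}) = \emptyset$. -/

import Mathlib

/-- The ordered sum `a_{i_1} + ⋯ + a_{i_m}` over a finite index set
`F = {i_1 < ⋯ < i_m}` (junk value `a 0` if `F = ∅`). -/
def ordsum {S : Type*} [AddSemigroup S] (a : ℕ → S) (F : Finset ℕ) : S :=
  match F.sort (· ≤ ·) with
  | [] => a 0
  | i :: l => l.foldl (fun s j => s + a j) (a i)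

/-- `F < G`: every element of `F` is smaller than every element of `G`. -/
def FinsetLT (F G : Finset ℕ) : Prop := ∀ i ∈ F, ∀ j ∈ G, i < j

/-- `FS(a_1, a_2, …)`: the set of all finite ordered sums of the sequence `a`. -/
def FSset {S : Type*} [AddSemigroup S] (a : ℕ → S) : Set S :=
  {s | ∃ F : Finset ℕ, F.Nonempty ∧ ordsum a F = s}

/-- `FS(a_n, a_{n+1}, …)`: finite ordered sums with all indices `≥ n`. -/
def FStail {S : Type*} [AddSemigroup S] (a : ℕ → S) (n : ℕ) : Set S :=
  {s | ∃ F : Finset ℕ, F.Nonempty ∧ (∀ i ∈ F, n ≤ i) ∧ ordsum a F = s}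

/-- A sequence is proper if `a_{F₁} ≠ a_{F₂}` whenever `F₁ < F₂`. -/
def IsProperSeq {S : Type*} [AddSemigroup S] (a : ℕ → S) : Prop :=
  ∀ F G : Finset ℕ, F.Nonempty → G.Nonempty → FinsetLT F G →
    ordsum a F ≠ ordsum a G

/-- `b` is a sumsequence of `a`: `b_k = a_{F_k}` for finite index sets `F₁ < F₂ < ⋯`. -/
def IsSumseq {S : Type*} [AddSemigroup S] (a b : ℕ → S) : Prop :=
  ∃ F : ℕ → Finset ℕ, (∀ k, (F k).Nonempty) ∧
    (∀ k, FinsetLT (F k) (F (k + 1))) ∧ (∀ k, b k = ordsum a (F k))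


/-- A proper IP set: contains `FS(b)` for an injective sequence `b`. -/
def IsProperIP {S : Type*} [AddSemigroup S] (A : Set S) : Prop :=
  ∃ b : ℕ → S, Function.Injective b ∧ FSset b ⊆ A

/-- Partition regularity of the family of proper IP sets of `S`. -/
def ProperIPPartReg (S : Type*) [AddSemigroup S] : Prop :=
  ∀ A : Set S, IsProperIP A → ∀ (k : ℕ) (c : S → Fin k),
    ∃ i : Fin k, IsProperIP {s ∈ A | c s = i}

/-- `FS(b_0, …, b_{n-1})`: ordered sums over nonempty `F ⊆ {0, …, n-1}`. -/
def FSfin {S : Type*} [AddSemigroup S] (a : ℕ → S) (n : ℕ) : Set S :=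
  {s | ∃ F : Finset ℕ, F.Nonempty ∧ F ⊆ Finset.range n ∧ ordsum a F = s}

/-- `FS_{≥2}(a)`: ordered sums with at least two summands. -/
def FS2set {S : Type*} [AddSemigroup S] (a : ℕ → S) : Set S :=
  {s | ∃ F : Finset ℕ, 2 ≤ F.card ∧ ordsum a F = s}

section Basics
variable {S : Type*} [AddSemigroup S] (a : ℕ → S)

private lemma foldl_add : ∀ (l : List ℕ) (x y : S),
    l.foldl (fun s j => s + a j) (x + y) = x + l.foldl (fun s j => s + a j) y := by
  intro l
  induction l with
  | nil => intro x y; rfl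
  | cons c l ih => intro x y; simp only [List.foldl_cons, add_assoc]; exact ih x (y + a c)

lemma sort_eq_cons {F : Finset ℕ} (hF : F.Nonempty) : ∃ i l, F.sort (· ≤ ·) = i :: l := by
  cases h : F.sort (· ≤ ·) with
  | nil =>
    exfalso
    have := Finset.length_sort (α := ℕ) (· ≤ ·) (s := F)
    rw [h] at this
    simp at this
    rw [← Finset.card_ne_zero] at hF
    omega
  | cons i l => exact ⟨i, l, rfl⟩

lemma ordsum_eq {F : Finset ℕ} {i : ℕ} {l : List ℕ} (hs : F.sort (· ≤ ·) = i :: l) :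
    ordsum a F = l.foldl (fun s j => s + a j) (a i) := by
  unfold ordsum; rw [hs]

lemma ordsum_singleton (k : ℕ) : ordsum a {k} = a k :=
  ordsum_eq a (Finset.sort_singleton _ k)

lemma ordsum_congr {b c : ℕ → S} {F : Finset ℕ} (hF : F.Nonempty)
    (h : ∀ i ∈ F, b i = c i) : ordsum b F = ordsum c F := by
  obtain ⟨i, l, hs⟩ := sort_eq_cons hF
  have hmem : ∀ j ∈ i :: l, b j = c j := by
    intro j hj
    apply h
    rw [← Finset.mem_sort (· ≤ ·), hs]
    exact hj
  rw [ordsum_eq b hs, ordsum_eq c hs, hmem i (by simp)]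
  have : ∀ (m : List ℕ) (x : S), (∀ j ∈ m, b j = c j) →
      m.foldl (fun s j => s + b j) x = m.foldl (fun s j => s + c j) x := by
    intro m
    induction m with
    | nil => intros; rfl
    | cons d m ih =>
      intro x hm
      simp only [List.foldl_cons]
      rw [hm d (by simp), ih _ (fun j hj => hm j (by simp [hj]))]
  exact this l _ (fun j hj => hmem j (by simp [hj]))

lemma sort_union {F G : Finset ℕ} (h : FinsetLT F G) :
    (F ∪ G).sort (· ≤ ·) = F.sort (· ≤ ·) ++ G.sort (· ≤ ·) := by
  have hdis : Disjoint F G := by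
    rw [Finset.disjoint_left]
    intro i hiF hiG
    exact lt_irrefl i (h i hiF i hiG)
  have key : ∀ (s : Finset ℕ), ((s.sort (· ≤ ·) : List ℕ) : Multiset ℕ) = s.val :=
    fun s => Multiset.sort_eq _ _
  refine (fun hp h1 h2 => List.Perm.eq_of_pairwise' (r := (· ≤ ·)) h1 h2 hp) ?_ ?_ ?_
  · rw [← Multiset.coe_eq_coe, ← Multiset.coe_add, key, key, key,
      ← Finset.disjUnion_eq_union F G hdis]
    rfl
  · exact Finset.pairwise_sort _ _
  · rw [List.pairwise_append]
    refine ⟨Finset.pairwise_sort _ _, Finset.pairwise_sort _ _, ?_⟩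
    intro x hx y hy
    exact le_of_lt (h x (by rwa [← Finset.mem_sort (· ≤ ·)]) y (by rwa [← Finset.mem_sort (· ≤ ·)]))

lemma ordsum_union {F G : Finset ℕ} (hF : F.Nonempty) (hG : G.Nonempty) (h : FinsetLT F G) :
    ordsum a (F ∪ G) = ordsum a F + ordsum a G := by
  obtain ⟨i, l, hsF⟩ := sort_eq_cons hF
  obtain ⟨j, m, hsG⟩ := sort_eq_cons hG
  have hs : (F ∪ G).sort (· ≤ ·) = i :: (l ++ j :: m) := by
    rw [sort_union h, hsF, hsG]; rfl
  rw [ordsum_eq a hs, ordsum_eq a hsF, ordsum_eq a hsG]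
  simp only [List.foldl_append, List.foldl_cons]
  rw [foldl_add]

lemma ordsum_pair {i j : ℕ} (hij : i < j) : ordsum a {i, j} = a i + a j := by
  have : ({i, j} : Finset ℕ) = {i} ∪ {j} := rfl
  rw [this, ordsum_union a ⟨i, by simp⟩ ⟨j, by simp⟩ (by intro x hx y hy; simp at hx hy; omega),
    ordsum_singleton, ordsum_singleton]

lemma ordsum_map {S' : Type*} [AddSemigroup S'] (f : S → S') (hf : ∀ x y, f (x + y) = f x + f y)
    (g : ℕ → S) {F : Finset ℕ} (hF : F.Nonempty) :
    f (ordsum g F) = ordsum (fun k => f (g k)) F := by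
  obtain ⟨i, l, hs⟩ := sort_eq_cons hF
  rw [ordsum_eq g hs, ordsum_eq _ hs]
  have : ∀ (m : List ℕ) (x : S), f (m.foldl (fun s j => s + g j) x)
      = m.foldl (fun s j => s + f (g j)) (f x) := by
    intro m
    induction m with
    | nil => intros; rfl
    | cons d m ih => intro x; simp only [List.foldl_cons, ← hf, ih]
  exact this l _

end Basics

section Blocks
variable {S : Type*} [AddSemigroup S] (a : ℕ → S)

/-- `G` is a (nonempty) union of blocks of `B`. -/
def UB (B : ℕ → Finset ℕ) (G : Finset ℕ) : Prop :=
  ∃ H : Finset ℕ, H.Nonempty ∧ G = H.biUnion B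

def Blocks (B : ℕ → Finset ℕ) : Prop :=
  (∀ k, (B k).Nonempty) ∧ ∀ k l, k < l → FinsetLT (B k) (B l)

lemma biUnion_nonempty {B : ℕ → Finset ℕ} {H : Finset ℕ}
    (hB : ∀ k ∈ H, (B k).Nonempty) (hH : H.Nonempty) : (H.biUnion B).Nonempty := by
  obtain ⟨k, hk⟩ := hH
  obtain ⟨x, hx⟩ := hB k hk
  exact ⟨x, Finset.mem_biUnion.2 ⟨k, hk, hx⟩⟩

lemma UB.nonempty {B : ℕ → Finset ℕ} (hB : ∀ k, (B k).Nonempty) {G : Finset ℕ}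
    (h : UB B G) : G.Nonempty := by
  obtain ⟨H, hH, rfl⟩ := h
  exact biUnion_nonempty (fun k _ => hB k) hH

lemma ordsum_biUnion {E : ℕ → Finset ℕ} {H : Finset ℕ} (hH : H.Nonempty)
    (hne : ∀ k ∈ H, (E k).Nonempty)
    (hlt : ∀ k ∈ H, ∀ l ∈ H, k < l → FinsetLT (E k) (E l)) :
    ordsum (fun k => ordsum a (E k)) H = ordsum a (H.biUnion E) := by
  classical
  induction H using Finset.strongInduction with
  | _ H ih =>
  set m := H.max' hH with hm
  by_cases h1 : H.erase m = ∅
  · have hs : H = {m} := by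
      have h2 := Finset.insert_erase (H.max'_mem hH)
      rw [h1] at h2
      simpa using h2.symm
    rw [hs, ordsum_singleton, Finset.singleton_biUnion]
  · have hH' : (H.erase m).Nonempty := Finset.nonempty_iff_ne_empty.2 h1
    have hsub : H.erase m ⊂ H := Finset.erase_ssubset (H.max'_mem hH)
    have hunion : H.erase m ∪ {m} = H := by
      rw [Finset.union_comm, ← Finset.insert_eq, Finset.insert_erase (H.max'_mem hH)]
    have hltHm : FinsetLT (H.erase m) {m} := by
      intro i hi j hj
      simp only [Finset.mem_singleton] at hj
      subst hj
      rcases Finset.mem_erase.1 hi with ⟨hne', hiH⟩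
      exact lt_of_le_of_ne (Finset.le_max' H i hiH) hne'
    have blt : FinsetLT ((H.erase m).biUnion E) (E m) := by
      intro i hi j hj
      obtain ⟨k, hk, hik⟩ := Finset.mem_biUnion.1 hi
      exact hlt k (Finset.mem_of_mem_erase hk) m (H.max'_mem hH)
        (hltHm k hk m (by simp)) i hik j hj
    have e1 : ordsum (fun k => ordsum a (E k)) H
        = ordsum (fun k => ordsum a (E k)) (H.erase m) + ordsum a (E m) := by
      conv_lhs => rw [← hunion]
      rw [ordsum_union _ hH' ⟨m, by simp⟩ hltHm, ordsum_singleton]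
    have e2 : H.biUnion E = (H.erase m).biUnion E ∪ E m := by
      ext x
      simp only [Finset.mem_biUnion, Finset.mem_union]
      constructor
      · rintro ⟨k, hk, hx⟩
        by_cases hkm : k = m
        · exact Or.inr (hkm ▸ hx)
        · exact Or.inl ⟨k, Finset.mem_erase.2 ⟨hkm, hk⟩, hx⟩
      · rintro (⟨k, hk, hx⟩ | hx)
        · exact ⟨k, Finset.mem_of_mem_erase hk, hx⟩
        · exact ⟨m, H.max'_mem hH, hx⟩
    rw [e1, e2,
      ordsum_union a (biUnion_nonempty (fun k hk => hne k (Finset.mem_of_mem_erase hk)) hH')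
        (hne m (H.max'_mem hH)) blt,
      ih (H.erase m) hsub hH' (fun k hk => hne k (Finset.mem_of_mem_erase hk))
        (fun k hk l hl hkl =>
          hlt k (Finset.mem_of_mem_erase hk) l (Finset.mem_of_mem_erase hl) hkl)]

end Blocks

section Tk
open scoped Classical

/-- Combination of tracked index sets: keep the union if they are compatible blocks. -/
noncomputable def fcomb : Option (Finset ℕ) → Option (Finset ℕ) → Option (Finset ℕ)
  | some F, some G =>
      if F.Nonempty ∧ G.Nonempty ∧ FinsetLT F G then some (F ∪ G) else none
  | _, none => none
  | none, _ => none

lemma fcomb_some (F G : Finset ℕ) : fcomb (some F) (some G)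
    = if F.Nonempty ∧ G.Nonempty ∧ FinsetLT F G then some (F ∪ G) else none := rfl

lemma fcomb_none_left (y : Option (Finset ℕ)) : fcomb none y = none := by cases y <;> rfl

lemma fcomb_none_right (x : Option (Finset ℕ)) : fcomb x none = none := by cases x <;> rfl

lemma fcomb_assoc (x y z : Option (Finset ℕ)) : fcomb (fcomb x y) z = fcomb x (fcomb y z) := by
  rcases x with _ | F
  · simp only [fcomb_none_left]
  rcases y with _ | G
  · simp only [fcomb_none_left, fcomb_none_right]
  rcases z with _ | H
  · simp only [fcomb_none_left, fcomb_none_right]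
  by_cases h1 : F.Nonempty ∧ G.Nonempty ∧ FinsetLT F G <;>
    by_cases h2 : G.Nonempty ∧ H.Nonempty ∧ FinsetLT G H
  · have hFH : FinsetLT F H := by
      intro i hi j hj
      obtain ⟨g, hg⟩ := h1.2.1
      exact lt_trans (h1.2.2 i hi g hg) (h2.2.2 g hg j hj)
    have c1 : (F ∪ G).Nonempty ∧ H.Nonempty ∧ FinsetLT (F ∪ G) H := by
      refine ⟨Finset.Nonempty.inl h1.1, h2.2.1, ?_⟩
      intro i hi j hj
      rcases Finset.mem_union.1 hi with h | h
      · exact hFH i h j hj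
      · exact h2.2.2 i h j hj
    have c2 : F.Nonempty ∧ (G ∪ H).Nonempty ∧ FinsetLT F (G ∪ H) := by
      refine ⟨h1.1, Finset.Nonempty.inl h2.1, ?_⟩
      intro i hi j hj
      rcases Finset.mem_union.1 hj with h | h
      · exact h1.2.2 i hi j h
      · exact hFH i hi j h
    simp only [fcomb_some]
    rw [if_pos h1, if_pos h2]
    simp only [fcomb_some]
    rw [if_pos c1, if_pos c2, Finset.union_assoc]
  · have c1 : ¬((F ∪ G).Nonempty ∧ H.Nonempty ∧ FinsetLT (F ∪ G) H) := by
      rintro ⟨-, hH, hlt⟩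
      exact h2 ⟨h1.2.1, hH, fun i hi j hj => hlt i (Finset.mem_union_right _ hi) j hj⟩
    simp only [fcomb_some]
    rw [if_pos h1, if_neg h2, fcomb_none_right]
    simp only [fcomb_some]
    rw [if_neg c1]
  · have c2 : ¬(F.Nonempty ∧ (G ∪ H).Nonempty ∧ FinsetLT F (G ∪ H)) := by
      rintro ⟨hF, -, hlt⟩
      exact h1 ⟨hF, h2.1, fun i hi j hj => hlt i hi j (Finset.mem_union_left _ hj)⟩
    simp only [fcomb_some]
    rw [if_neg h1, if_pos h2, fcomb_none_left]
    simp only [fcomb_some]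
    rw [if_neg c2]
  · simp only [fcomb_some]
    rw [if_neg h1, if_neg h2, fcomb_none_left, fcomb_none_right]

/-- Semigroup tracking an element of `S` together with an index block. -/
structure Tk (S : Type*) where
  s : S
  iv : Option (Finset ℕ)

noncomputable def Tk.addfn {S : Type*} [AddSemigroup S] (x y : Tk S) : Tk S :=
  ⟨x.s + y.s, fcomb x.iv y.iv⟩

lemma Tk.addfn_assoc {S : Type*} [AddSemigroup S] (x y z : Tk S) :
    Tk.addfn (Tk.addfn x y) z = Tk.addfn x (Tk.addfn y z) := by
  unfold Tk.addfn
  rw [add_assoc, fcomb_assoc]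

noncomputable instance {S : Type*} [AddSemigroup S] : AddSemigroup (Tk S) where
  add := Tk.addfn
  add_assoc := Tk.addfn_assoc

@[simp] lemma Tk.add_s {S : Type*} [AddSemigroup S] (x y : Tk S) : (x + y).s = x.s + y.s := rfl
@[simp] lemma Tk.add_iv {S : Type*} [AddSemigroup S] (x y : Tk S) :
    (x + y).iv = fcomb x.iv y.iv := rfl

end Tk

section FSlemmas
variable {S : Type*} [AddSemigroup S]

/-- Ordered sums over finite index sets (with a lower bound on indices) belong to `FS`. -/
lemma ordsum_mem_FS (q : Stream' S) :
    ∀ (K : Finset ℕ), K.Nonempty → ∀ (j : ℕ), (∀ i ∈ K, j ≤ i) →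
      ordsum (fun k => q.get k) K ∈ Hindman.FS (q.drop j) := by
  classical
  intro K
  induction K using Finset.strongInduction with
  | _ K ih =>
  intro hK j hj
  set k0 := K.min' hK with hk0
  have hk0K : k0 ∈ K := K.min'_mem hK
  have hjk : j ≤ k0 := hj k0 hk0K
  have hdrop : Stream'.drop (k0 - j) (Stream'.drop j q) = Stream'.drop k0 q := by
    rw [Stream'.drop_drop, Nat.add_sub_cancel' hjk]
  have hdropFS : ∀ (m : S), m ∈ Hindman.FS (q.drop k0) → m ∈ Hindman.FS (q.drop j) :=
    fun m hm => Hindman.FS_iter_tail_sub_FS _ (k0 - j) (by rw [hdrop]; exact hm)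
  by_cases h1 : K.erase k0 = ∅
  · have hs : K = {k0} := by
      have h2 := Finset.insert_erase hk0K
      rw [h1] at h2
      simpa using h2.symm
    rw [hs, ordsum_singleton]
    apply hdropFS
    have : q.get k0 = (q.drop k0).head := (Stream'.head_drop q k0).symm
    rw [this]
    exact Hindman.FS.head' _
  · have hK' : (K.erase k0).Nonempty := Finset.nonempty_iff_ne_empty.2 h1
    have hsub : K.erase k0 ⊂ K := Finset.erase_ssubset hk0K
    have hmin : ∀ i ∈ K.erase k0, k0 + 1 ≤ i := by
      intro i hi
      rcases Finset.mem_erase.1 hi with ⟨hne, hiK⟩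
      have := K.min'_le i hiK
      omega
    have hunion : {k0} ∪ K.erase k0 = K := by
      rw [← Finset.insert_eq, Finset.insert_erase hk0K]
    have e1 : ordsum (fun k => q.get k) K
        = q.get k0 + ordsum (fun k => q.get k) (K.erase k0) := by
      conv_lhs => rw [← hunion]
      rw [ordsum_union _ ⟨k0, by simp⟩ hK'
        (by intro i hi j' hj'; simp only [Finset.mem_singleton] at hi; subst hi
            exact lt_of_lt_of_le (by omega) (hmin j' hj')), ordsum_singleton]
    have hrest := ih (K.erase k0) hsub hK' (k0 + 1) hmin
    have htail : (q.drop k0).tail = q.drop (k0 + 1) := by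
      rw [Stream'.tail_eq_drop, Stream'.drop_drop, Nat.add_comm]
    rw [e1]
    apply hdropFS
    have : q.get k0 = (q.drop k0).head := (Stream'.head_drop q k0).symm
    rw [this]
    apply Hindman.FS.cons'
    rw [htail]
    exact hrest

lemma ordsum_mem_FS' (q : Stream' S) (K : Finset ℕ) (hK : K.Nonempty) :
    ordsum (fun k => q.get k) K ∈ Hindman.FS q := by
  have := ordsum_mem_FS q K hK 0 (fun i _ => Nat.zero_le i)
  rwa [Stream'.drop_zero] at this

variable (a : ℕ → S)

/-- Structure of elements of `FS` of a block stream in `Tk S`. -/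
lemma FS_struct {w : Tk S} {q : Stream' (Tk S)} (hw : w ∈ Hindman.FS q) :
    ∀ (D : ℕ → Finset ℕ), (∀ k, (D k).Nonempty) → (∀ k l, k < l → FinsetLT (D k) (D l)) →
      (q = fun k => ⟨ordsum a (D k), some (D k)⟩) →
      ∃ K : Finset ℕ, K.Nonempty ∧ w.s = ordsum a (K.biUnion D) ∧ w.iv = some (K.biUnion D)
        ∧ (K.biUnion D).Nonempty := by
  classical
  induction hw with
  | head' q =>
    intro D hD hDlt hq
    refine ⟨{0}, ⟨0, by simp⟩, ?_⟩
    have : q.head = ⟨ordsum a (D 0), some (D 0)⟩ := by rw [hq]; rfl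
    rw [this, Finset.singleton_biUnion]
    exact ⟨rfl, rfl, hD 0⟩
  | tail' q m hm ih =>
    intro D hD hDlt hq
    obtain ⟨K, hK, h1, h2, h3⟩ := ih (fun k => D (k + 1)) (fun k => hD (k + 1))
      (fun k l hkl => hDlt (k + 1) (l + 1) (by omega)) (by rw [hq]; rfl)
    refine ⟨K.image (· + 1), hK.image _, ?_, ?_, ?_⟩ <;>
      rw [Finset.image_biUnion] <;> [exact h1; exact h2; exact h3]
  | cons' q m hm ih =>
    intro D hD hDlt hq
    obtain ⟨K, hK, h1, h2, h3⟩ := ih (fun k => D (k + 1)) (fun k => hD (k + 1))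
      (fun k l hkl => hDlt (k + 1) (l + 1) (by omega)) (by rw [hq]; rfl)
    have hU : (K.image (· + 1)).biUnion D = K.biUnion (fun k => D (k + 1)) :=
      Finset.image_biUnion
    have hhead : q.head = ⟨ordsum a (D 0), some (D 0)⟩ := by rw [hq]; rfl
    have hlt0 : FinsetLT (D 0) (K.biUnion fun k => D (k + 1)) := by
      intro i hi j hj
      obtain ⟨k, hk, hjk⟩ := Finset.mem_biUnion.1 hj
      exact hDlt 0 (k + 1) (by omega) i hi j hjk
    refine ⟨insert 0 (K.image (· + 1)), ⟨0, by simp⟩, ?_, ?_, ?_⟩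
    · rw [Finset.biUnion_insert, hU, Tk.add_s, hhead]
      show ordsum a (D 0) + m.s = _
      rw [h1, ← ordsum_union a (hD 0) h3 hlt0]
    · rw [Finset.biUnion_insert, hU, Tk.add_iv, hhead]
      show fcomb (some (D 0)) m.iv = _
      rw [h2, fcomb_some, if_pos ⟨hD 0, h3, hlt0⟩]
    · rw [Finset.biUnion_insert]
      exact Finset.Nonempty.inl (hD 0)

end FSlemmas

section Steps
variable {S : Type*} [AddSemigroup S] (a : ℕ → S)

lemma FinsetLT_trans {F G H : Finset ℕ} (hG : G.Nonempty) (h1 : FinsetLT F G)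
    (h2 : FinsetLT G H) : FinsetLT F H := by
  intro i hi j hj
  obtain ⟨g, hg⟩ := hG
  exact lt_trans (h1 i hi g hg) (h2 g hg j hj)

lemma UB_refl (B : ℕ → Finset ℕ) (k : ℕ) : UB B (B k) :=
  ⟨{k}, ⟨k, by simp⟩, (Finset.singleton_biUnion).symm⟩

lemma UB_biUnion {B C : ℕ → Finset ℕ} {H : Finset ℕ} (hH : H.Nonempty)
    (h : ∀ k ∈ H, UB B (C k)) : UB B (H.biUnion C) := by
  classical
  choose K hK1 hK2 using h
  refine ⟨H.attach.biUnion (fun k => K k.1 k.2), ?_, ?_⟩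
  · obtain ⟨k, hk⟩ := hH
    obtain ⟨j, hj⟩ := hK1 k hk
    exact ⟨j, Finset.mem_biUnion.2 ⟨⟨k, hk⟩, Finset.mem_attach _ _, hj⟩⟩
  · ext x
    simp only [Finset.mem_biUnion, Finset.mem_attach, true_and, Subtype.exists]
    constructor
    · rintro ⟨k, hk, hx⟩
      rw [hK2 k hk] at hx
      obtain ⟨j, hj, hxj⟩ := Finset.mem_biUnion.1 hx
      exact ⟨j, ⟨k, hk, hj⟩, hxj⟩
    · rintro ⟨j, ⟨k, hk, hj⟩, hxj⟩
      exact ⟨k, hk, by rw [hK2 k hk]; exact Finset.mem_biUnion.2 ⟨j, hj, hxj⟩⟩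

lemma UB_trans {B B' : ℕ → Finset ℕ} (h : ∀ k, UB B (B' k)) {G : Finset ℕ}
    (hG : UB B' G) : UB B G := by
  obtain ⟨H, hH, rfl⟩ := hG
  exact UB_biUnion hH (fun k _ => h k)

lemma Blocks.le_of_mem {B : ℕ → Finset ℕ} (hB : Blocks B) :
    ∀ j, ∀ i ∈ B j, j ≤ i := by
  intro j
  induction j with
  | zero => exact fun i _ => Nat.zero_le i
  | succ j ih =>
    intro i hi
    obtain ⟨x, hx⟩ := hB.1 j
    have h1 := ih x hx
    have h2 := hB.2 j (j + 1) (by omega) x hx i hi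
    omega

/-- The invariant for a greedily-built prefix. -/
def InvAt (B C : ℕ → Finset ℕ) (n : ℕ) : Prop :=
  (∀ k, k ≤ n → UB B (C k)) ∧
  (∀ k l, k < l → l ≤ n → FinsetLT (C k) (C l)) ∧
  (∀ m, m < n → ∀ x ∈ FSfin (fun k => ordsum a (C k)) (m + 1),
      x + ordsum a (C (m + 1)) ∉ FSfin (fun k => ordsum a (C k)) (m + 1))

/-- Stuckness: every further block causes a collision with the prefix sums. -/
def StuckAt (B C : ℕ → Finset ℕ) (n : ℕ) : Prop :=
  ∀ G, UB B G → FinsetLT (C n) G →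
    ∃ F1 F2 : Finset ℕ, F1 ⊆ Finset.range (n + 1) ∧ F1.Nonempty ∧
      F2 ⊆ Finset.range (n + 1) ∧ F2.Nonempty ∧
      ordsum (fun k => ordsum a (C k)) F1 + ordsum a G = ordsum (fun k => ordsum a (C k)) F2

/-- The Hindman step: a stuck configuration yields an absorbing element. -/
lemma hindman_step {B C : ℕ → Finset ℕ} {n : ℕ} (hB : Blocks B)
    (hInv : InvAt a B C n) (hStuck : StuckAt a B C n) :
    ∃ (GZ : Finset ℕ) (B' : ℕ → Finset ℕ), GZ.Nonempty ∧ UB B GZ ∧ Blocks B' ∧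
      (∀ k, UB B (B' k)) ∧ (∀ k, FinsetLT GZ (B' k)) ∧
      (∀ G, UB B' G → ordsum a GZ + ordsum a G = ordsum a GZ) := by
  classical
  have hCn_ne : (C n).Nonempty := UB.nonempty hB.1 (hInv.1 n le_rfl)
  set m0 : ℕ := (C n).max' hCn_ne + 1 with hm0
  have hBle := Blocks.le_of_mem hB
  set D : ℕ → Finset ℕ := fun k => B (m0 + k) with hD
  have hD_ne : ∀ k, (D k).Nonempty := fun k => hB.1 _
  have hD_lt : ∀ k l, k < l → FinsetLT (D k) (D l) := fun k l h => hB.2 _ _ (by omega)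
  have hD_ge : ∀ k, ∀ i ∈ D k, m0 ≤ i := fun k i hi =>
    le_trans (by omega) (hBle (m0 + k) i hi)
  have hC_lt : ∀ k', k' ≤ n → ∀ i ∈ C k', i < m0 := by
    intro k' hk' i hi
    rcases eq_or_lt_of_le hk' with rfl | h
    · have := Finset.le_max' (C k') i hi
      omega
    · obtain ⟨y, hy⟩ := hCn_ne
      have h1 := hInv.2.1 k' n h le_rfl i hi y hy
      have h2 := Finset.le_max' (C n) y hy
      omega
  set p : Stream' (Tk S) := fun k => (⟨ordsum a (D k), some (D k)⟩ : Tk S) with hp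
  set P : Finset (Finset ℕ × Finset ℕ) :=
    ((Finset.range (n + 1)).powerset.filter Finset.Nonempty) ×ˢ
      ((Finset.range (n + 1)).powerset.filter Finset.Nonempty) with hP
  set colors : Set (Set (Tk S)) := (fun pr : Finset ℕ × Finset ℕ =>
    {w ∈ Hindman.FS p | ordsum (fun k => ordsum a (C k)) pr.1 + w.s
      = ordsum (fun k => ordsum a (C k)) pr.2}) '' ↑P with hcolors
  have hfin : colors.Finite := (P : Set (Finset ℕ × Finset ℕ)).toFinite.image _
  have hcov : Hindman.FS p ⊆ ⋃₀ colors := by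
    intro w hw
    obtain ⟨K, hK, hs, hiv, hne⟩ := FS_struct a hw D hD_ne hD_lt rfl
    have hUB : UB B (K.biUnion D) :=
      ⟨K.image (m0 + ·), hK.image _, by rw [Finset.image_biUnion]⟩
    have hLT : FinsetLT (C n) (K.biUnion D) := by
      intro i hi j hj
      obtain ⟨k, hk, hjk⟩ := Finset.mem_biUnion.1 hj
      have h1 := hD_ge k j hjk
      have h2 := Finset.le_max' (C n) i hi
      omega
    obtain ⟨F1, F2, hF1, hF1ne, hF2, hF2ne, heq⟩ := hStuck _ hUB hLT
    refine ⟨_, ⟨(F1, F2), ?_, rfl⟩, hw, ?_⟩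
    · simp only [Finset.coe_mem, Finset.mem_coe, hP, Finset.mem_product, Finset.mem_filter,
        Finset.mem_powerset]
      exact ⟨⟨hF1, hF1ne⟩, ⟨hF2, hF2ne⟩⟩
    · rw [← hs] at heq
      exact heq
  obtain ⟨c, hc, b, hbc⟩ := Hindman.FS_partition_regular p colors hfin hcov
  obtain ⟨⟨F1, F2⟩, hPmem, rfl⟩ := hc
  simp only [Finset.mem_coe, hP, Finset.mem_product, Finset.mem_filter,
    Finset.mem_powerset] at hPmem
  obtain ⟨⟨hF1sub, hF1ne⟩, ⟨hF2sub, hF2ne⟩⟩ := hPmem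
  set x : S := ordsum (fun k => ordsum a (C k)) F1 with hx
  set z : S := ordsum (fun k => ordsum a (C k)) F2 with hzdef
  have hF2le : ∀ k ∈ F2, k ≤ n := fun k hk => by
    have := hF2sub hk; simp only [Finset.mem_range] at this; omega
  set GZ : Finset ℕ := F2.biUnion C with hGZ
  have hzeq : ordsum a GZ = z := by
    rw [hzdef, ordsum_biUnion a hF2ne (fun k hk => UB.nonempty hB.1 (hInv.1 k (hF2le k hk)))
      (fun k hk l hl hkl => hInv.2.1 k l hkl (hF2le l hl))]
  have hGZne : GZ.Nonempty :=
    biUnion_nonempty (fun k hk => UB.nonempty hB.1 (hInv.1 k (hF2le k hk))) hF2ne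
  have hGZUB : UB B GZ := UB_biUnion hF2ne (fun k hk => hInv.1 k (hF2le k hk))
  have hGZlt : ∀ i ∈ GZ, i < m0 := by
    intro i hi
    obtain ⟨k, hk, hik⟩ := Finset.mem_biUnion.1 hi
    exact hC_lt k (hF2le k hk) i hik
  have hbFSp : ∀ k, b.get k ∈ Hindman.FS p := fun k => (hbc (Hindman.FS.singleton b k)).1
  have hcolor : ∀ w ∈ Hindman.FS b, x + w.s = z := fun w hw => (hbc hw).2
  have hEdata : ∀ k, ∃ E : Finset ℕ, (∃ K : Finset ℕ, K.Nonempty ∧ E = K.biUnion D) ∧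
      (b.get k).s = ordsum a E ∧ (b.get k).iv = some E ∧ E.Nonempty := by
    intro k
    obtain ⟨K, hK, h1, h2, h3⟩ := FS_struct a (hbFSp k) D hD_ne hD_lt rfl
    exact ⟨K.biUnion D, ⟨K, hK, rfl⟩, h1, h2, h3⟩
  choose E hEUB hEs hEiv hEne using hEdata
  have hEge : ∀ k, ∀ i ∈ E k, m0 ≤ i := by
    intro k i hi
    obtain ⟨K, hK, hKE⟩ := hEUB k
    rw [hKE] at hi
    obtain ⟨j, hj, hij⟩ := Finset.mem_biUnion.1 hi
    exact hD_ge j i hij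
  have hElt : ∀ i j, i < j → FinsetLT (E i) (E j) := by
    intro i j hij
    have hmem : ordsum (fun k => b.get k) {i, j} ∈ Hindman.FS b :=
      ordsum_mem_FS' b _ ⟨i, by simp⟩
    obtain ⟨K, hK, hs1, hiv1, hne1⟩ := FS_struct a (hbc hmem).1 D hD_ne hD_lt rfl
    rw [ordsum_pair _ hij, Tk.add_iv, hEiv i, hEiv j, fcomb_some] at hiv1
    by_cases hcnd : (E i).Nonempty ∧ (E j).Nonempty ∧ FinsetLT (E i) (E j)
    · exact hcnd.2.2
    · rw [if_neg hcnd] at hiv1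
      exact absurd hiv1 (by simp)
  refine ⟨GZ, fun k => E (k + 1), hGZne, hGZUB,
    ⟨fun k => hEne _, fun k l h => hElt _ _ (by omega)⟩, ?_, ?_, ?_⟩
  · intro k
    obtain ⟨K, hK, hKE⟩ := hEUB (k + 1)
    exact ⟨K.image (m0 + ·), hK.image _, by rw [Finset.image_biUnion, ← hKE]⟩
  · intro k i hi j hj
    have h1 := hGZlt i hi
    have h2 := hEge (k + 1) j hj
    omega
  · rintro G ⟨H, hH, rfl⟩
    set Hs : Finset ℕ := H.image (· + 1) with hHs
    have hHs_ne : Hs.Nonempty := hH.image _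
    have h0Hs : FinsetLT {0} Hs := by
      intro i hi j hj
      simp only [Finset.mem_singleton] at hi
      subst hi
      simp only [hHs, Finset.mem_image] at hj
      omega
    set v : Tk S := ordsum (fun k => b.get k) Hs with hv
    have hw' : ordsum (fun k => b.get k) (insert 0 Hs) ∈ Hindman.FS b :=
      ordsum_mem_FS' b _ ⟨0, by simp⟩
    have hsplit : ordsum (fun k => b.get k) (insert 0 Hs) = b.get 0 + v := by
      rw [Finset.insert_eq, ordsum_union _ ⟨0, by simp⟩ hHs_ne h0Hs, ordsum_singleton]
    have h0 : x + (b.get 0).s = z := hcolor _ (Hindman.FS.singleton b 0)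
    have hws : x + ((b.get 0).s + v.s) = z := by
      have := hcolor _ hw'
      rw [hsplit, Tk.add_s] at this
      exact this
    have key : z + v.s = z := by
      conv_lhs => rw [← h0]
      rw [add_assoc, hws]
    have hvs : v.s = ordsum a (H.biUnion fun k => E (k + 1)) := by
      rw [hv, ordsum_map Tk.s (fun u v => rfl) _ hHs_ne,
        ordsum_congr hHs_ne (fun k _ => hEs k),
        ordsum_biUnion a hHs_ne (fun k _ => hEne k)
          (fun k hk l hl hkl => hElt k l hkl),
        hHs, Finset.image_biUnion]
    rw [hzeq, ← hvs, key]

end Steps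

section Greedy
variable {S : Type*} [AddSemigroup S] (a : ℕ → S)

lemma FSfin_congr {b c : ℕ → S} {N : ℕ} (h : ∀ k, k < N → b k = c k) :
    FSfin b N = FSfin c N := by
  ext x
  constructor <;> rintro ⟨F, hFne, hFsub, rfl⟩
  · exact ⟨F, hFne, hFsub, ordsum_congr hFne (fun i hi => (h i (by
      have := hFsub hi; simpa [Finset.mem_range] using this)).symm)⟩
  · exact ⟨F, hFne, hFsub, ordsum_congr hFne (fun i hi => h i (by
      have := hFsub hi; simpa [Finset.mem_range] using this))⟩

lemma InvAt_congr {B C C' : ℕ → Finset ℕ} {n : ℕ} (h : ∀ k, k ≤ n → C k = C' k)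
    (hI : InvAt a B C n) : InvAt a B C' n := by
  have hfs : ∀ m, m < n → FSfin (fun k => ordsum a (C k)) (m + 1)
      = FSfin (fun k => ordsum a (C' k)) (m + 1) := by
    intro m hm
    exact FSfin_congr (fun k hk => by rw [h k (by omega)])
  refine ⟨fun k hk => h k hk ▸ hI.1 k hk, fun k l hkl hl => by
    rw [← h k (by omega), ← h l hl]; exact hI.2.1 k l hkl hl, ?_⟩
  intro m hm x hx
  rw [← hfs m hm] at hx ⊢
  rw [← h (m + 1) (by omega)]
  exact hI.2.2 m hm x hx

lemma exists_stuck {B : ℕ → Finset ℕ} (hB : Blocks B)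
    (hng : ∀ C : ℕ → Finset ℕ, Blocks C →
      ¬(∀ n : ℕ, ∀ x ∈ FSfin (fun k => ordsum a (C k)) (n + 1),
        x + ordsum a (C (n + 1)) ∉ FSfin (fun k => ordsum a (C k)) (n + 1))) :
    ∃ C n, InvAt a B C n ∧ StuckAt a B C n := by
  classical
  by_contra hcon
  push_neg at hcon
  have hext : ∀ (C : ℕ → Finset ℕ) (n : ℕ), InvAt a B C n → ∃ G, UB B G ∧ FinsetLT (C n) G ∧
      ∀ F1 F2 : Finset ℕ, F1 ⊆ Finset.range (n + 1) → F1.Nonempty →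
        F2 ⊆ Finset.range (n + 1) → F2.Nonempty →
        ordsum (fun k => ordsum a (C k)) F1 + ordsum a G
          ≠ ordsum (fun k => ordsum a (C k)) F2 := by
    intro C n hI
    have h1 : ¬ StuckAt a B C n := hcon C n hI
    unfold StuckAt at h1
    push_neg at h1
    obtain ⟨G, hG1, hG2, hG3⟩ := h1
    refine ⟨G, hG1, hG2, fun F1 F2 h1' h2' h3' h4' => ?_⟩
    have := hG3 F1 F2 h1' h2' h3'
    intro heq
    exact (this h4') heq
  have hext' : ∀ (C : ℕ → Finset ℕ) (n : ℕ), ∃ G, InvAt a B C n → UB B G ∧ FinsetLT (C n) G ∧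
      ∀ F1 F2 : Finset ℕ, F1 ⊆ Finset.range (n + 1) → F1.Nonempty →
        F2 ⊆ Finset.range (n + 1) → F2.Nonempty →
        ordsum (fun k => ordsum a (C k)) F1 + ordsum a G
          ≠ ordsum (fun k => ordsum a (C k)) F2 := by
    intro C n
    by_cases h : InvAt a B C n
    · obtain ⟨G, hG⟩ := hext C n h
      exact ⟨G, fun _ => hG⟩
    · exact ⟨∅, fun hI => absurd hI h⟩
  choose Gf hGf using hext'
  set st : ℕ → (ℕ → Finset ℕ) := fun n =>
    Nat.rec (fun _ => B 0) (fun n prev => Function.update prev (n + 1) (Gf prev n)) n with hst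
  have hst_succ : ∀ n, st (n + 1) = Function.update (st n) (n + 1) (Gf (st n) n) :=
    fun n => rfl
  have hst_stab : ∀ n k, k ≤ n → st (n + 1) k = st n k := by
    intro n k hk
    rw [hst_succ]
    exact Function.update_of_ne (by omega) _ _
  have hst_stab' : ∀ m n k, k ≤ n → n ≤ m → st m k = st n k := by
    intro m
    induction m with
    | zero => intro n k hk hn; rw [Nat.le_zero.1 hn]
    | succ m ih =>
      intro n k hk hn
      rcases Nat.lt_or_ge n (m + 1) with h | h
      · rw [hst_stab m k (by omega), ih n k hk (by omega)]
      · have : n = m + 1 := by omega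
        rw [this]
  have hInvSt : ∀ n, InvAt a B (st n) n := by
    intro n
    induction n with
    | zero =>
      refine ⟨fun k _ => UB_refl B 0, fun k l hkl hl => by omega, fun m hm => by omega⟩
    | succ n ih =>
      obtain ⟨hUB, hLT, hcf⟩ := hGf (st n) n ih
      have hupd : ∀ k, k ≤ n → st (n + 1) k = st n k := hst_stab n
      have hGval : st (n + 1) (n + 1) = Gf (st n) n := by
        rw [hst_succ]; exact Function.update_self _ _ _
      have hCn_ne : (st n n).Nonempty := UB.nonempty hB.1 (ih.1 n le_rfl)
      have hfs : ∀ m, m < n + 1 → FSfin (fun k => ordsum a (st (n + 1) k)) (m + 1)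
          = FSfin (fun k => ordsum a (st n k)) (m + 1) :=
        fun m hm => FSfin_congr (fun k hk => by rw [hupd k (by omega)])
      refine ⟨?_, ?_, ?_⟩
      · intro k hk
        rcases Nat.lt_or_ge k (n + 1) with h | h
        · rw [hupd k (by omega)]; exact ih.1 k (by omega)
        · have : k = n + 1 := by omega
          rw [this, hGval]; exact hUB
      · intro k l hkl hl
        rcases Nat.lt_or_ge l (n + 1) with h | h
        · rw [hupd k (by omega), hupd l (by omega)]
          exact ih.2.1 k l hkl (by omega)
        · have hl' : l = n + 1 := by omega
          subst hl'
          rw [hupd k (by omega), hGval]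
          rcases Nat.lt_or_ge k n with h' | h'
          · exact FinsetLT_trans hCn_ne (ih.2.1 k n h' le_rfl) hLT
          · have : k = n := by omega
            rw [this]; exact hLT
      · intro m hm x hx
        rcases Nat.lt_or_ge m n with h | h
        · rw [hfs m hm] at hx ⊢
          rw [hupd (m + 1) (by omega)]
          exact ih.2.2 m h x hx
        · have hmn : m = n := by omega
          subst hmn
          rw [hfs m (by omega)] at hx ⊢
          rw [hGval]
          obtain ⟨F1, hF1ne, hF1sub, hxeq⟩ := hx
          rintro ⟨F2, hF2ne, hF2sub, hzeq⟩
          exact hcf F1 F2 hF1sub hF1ne hF2sub hF2ne (by rw [hxeq, hzeq])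
  set Cf : ℕ → Finset ℕ := fun k => st k k with hCf
  have hCfst : ∀ n k, k ≤ n → Cf k = st n k := fun n k hk => (hst_stab' n k k le_rfl hk).symm
  have hInvCf : ∀ n, InvAt a B Cf n := fun n =>
    InvAt_congr a (fun k hk => (hCfst n k hk).symm) (hInvSt n)
  have hBlocksCf : Blocks Cf :=
    ⟨fun k => UB.nonempty hB.1 ((hInvCf k).1 k le_rfl),
      fun k l hkl => (hInvCf l).2.1 k l hkl le_rfl⟩
  exact hng Cf hBlocksCf (fun n x hx => (hInvCf (n + 1)).2.2 n (by omega) x hx)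

end Greedy

theorem stmt8 {S : Type*} [AddSemigroup S] (a : ℕ → S) :
    ∃ b : ℕ → S, IsSumseq a b ∧
      ((∀ n m : ℕ, n < m → b n + b m = b n) ∨
        (∀ n : ℕ, ∀ x ∈ FSfin b (n + 1), x + b (n + 1) ∉ FSfin b (n + 1))) := by
  classical
  by_cases h : ∃ C : ℕ → Finset ℕ, Blocks C ∧
      (∀ n : ℕ, ∀ x ∈ FSfin (fun k => ordsum a (C k)) (n + 1),
        x + ordsum a (C (n + 1)) ∉ FSfin (fun k => ordsum a (C k)) (n + 1))
  · obtain ⟨C, hC, hP⟩ := h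
    exact ⟨fun k => ordsum a (C k),
      ⟨C, hC.1, fun k => hC.2 k (k + 1) (by omega), fun k => rfl⟩, Or.inr hP⟩
  · have hng : ∀ C : ℕ → Finset ℕ, Blocks C →
        ¬(∀ n : ℕ, ∀ x ∈ FSfin (fun k => ordsum a (C k)) (n + 1),
          x + ordsum a (C (n + 1)) ∉ FSfin (fun k => ordsum a (C k)) (n + 1)) :=
      fun C hC hP => h ⟨C, hC, hP⟩
    have step : ∀ B : {B : ℕ → Finset ℕ // Blocks B},
        ∃ pr : Finset ℕ × {B' : ℕ → Finset ℕ // Blocks B'}, pr.1.Nonempty ∧ UB B.1 pr.1 ∧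
          (∀ k, UB B.1 (pr.2.1 k)) ∧ (∀ k, FinsetLT pr.1 (pr.2.1 k)) ∧
          (∀ G, UB pr.2.1 G → ordsum a pr.1 + ordsum a G = ordsum a pr.1) := by
      rintro ⟨B, hB⟩
      obtain ⟨C, n, hI, hS⟩ := exists_stuck a hB hng
      obtain ⟨GZ, B', hGZne, hGZUB, hB', hUB', hLT', habs⟩ := hindman_step a hB hI hS
      exact ⟨(GZ, ⟨B', hB'⟩), hGZne, hGZUB, hUB', hLT', habs⟩
    choose next hnext using step
    set B0 : {B : ℕ → Finset ℕ // Blocks B} :=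
      ⟨fun k => {k}, fun k => ⟨k, by simp⟩, fun k l hkl i hi j hj => by
        simp only [Finset.mem_singleton] at hi hj; omega⟩ with hB0
    set Bs : ℕ → {B : ℕ → Finset ℕ // Blocks B} := fun n =>
      Nat.rec B0 (fun _ prev => (next prev).2) n with hBs
    set Zs : ℕ → Finset ℕ := fun n => (next (Bs n)).1 with hZs
    have hBs_succ : ∀ n, Bs (n + 1) = (next (Bs n)).2 := fun n => rfl
    have hZne : ∀ n, (Zs n).Nonempty := fun n => (hnext (Bs n)).1
    have hZUB : ∀ n, UB (Bs n).1 (Zs n) := fun n => (hnext (Bs n)).2.1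
    have hBUB : ∀ n k, UB (Bs n).1 ((Bs (n + 1)).1 k) := fun n k =>
      (hnext (Bs n)).2.2.1 k
    have hZLT : ∀ n k, FinsetLT (Zs n) ((Bs (n + 1)).1 k) := fun n k =>
      (hnext (Bs n)).2.2.2.1 k
    have habs : ∀ n G, UB (Bs (n + 1)).1 G →
        ordsum a (Zs n) + ordsum a G = ordsum a (Zs n) := fun n =>
      (hnext (Bs n)).2.2.2.2
    have hchain : ∀ i d G, UB ((Bs (i + d)).1) G → UB ((Bs i).1) G := by
      intro i d
      induction d with
      | zero => exact fun G hG => hG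
      | succ d ih =>
        intro G hG
        have : UB ((Bs (i + d)).1) G := UB_trans (hBUB (i + d)) hG
        exact ih G this
    refine ⟨fun n => ordsum a (Zs n), ⟨Zs, hZne, ?_, fun k => rfl⟩, Or.inl ?_⟩
    · intro k i hi j hj
      obtain ⟨H, hH, hHeq⟩ := hZUB (k + 1)
      rw [hHeq] at hj
      obtain ⟨l, hl, hjl⟩ := Finset.mem_biUnion.1 hj
      exact hZLT k l i hi j hjl
    · intro n m hnm
      have hUBm : UB ((Bs (n + 1)).1) (Zs m) := by
        have hd : n + 1 + (m - (n + 1)) = m := by omega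
        exact hchain (n + 1) (m - (n + 1)) (Zs m) (by rw [hd]; exact hZUB m)
      exact habs n (Zs m) hUBm
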